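/- arXiv:1302.6745 — 2 statements merged into one kernel-verified Lean document; each statement's English description precedes it below -/
import Mathlib

section
/- Assume a_{j,k} = 1 for all j,k ∈ ℕ, and let c be a mild solution of the RBK system on [0,∞). Define ν(t) := Σ_{j=1}^∞ c_j(t) and ν_odd(t) := Σ_{j=1}^∞ c_{2j−1}(t). Then for all t ≥ 0: (a) ν_odd(t) = ν_odd(0)/(1 + ν_odd(0)·t); (b) ν(0)/(1 + ν(0)·t) ≤ ν(t) ≤ ν(0)/(1 + (ν(0)/2)·t). -/
open MeasureTheory Filter Topology
open scoped ENNReal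

/-- Membership in `X₁⁺`: sequences `(c_j)_{j≥1}` (encoded as `c (j+1)` for `j : ℕ`)
with nonnegative entries and `Σ_{j≥1} j c_j < ∞`. -/
def MemX1plus (c : ℕ → ℝ) : Prop :=
  (∀ j : ℕ, 0 ≤ c (j + 1)) ∧ Summable (fun j : ℕ => ((j : ℝ) + 1) * c (j + 1))

/-- The norm `‖c‖₁ = Σ_{j≥1} j c_j`. -/
noncomputable def norm1 (c : ℕ → ℝ) : ℝ := ∑' j : ℕ, ((j : ℝ) + 1) * c (j + 1)

/-- A (mild) solution of the RBK coagulation system on `[0,T)`, `T ∈ (0,∞]`: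
(i) each `c_j` is continuous, `c(t) ∈ X₁⁺` and `sup_t ‖c(t)‖₁ < ∞`;
(ii) for each `j` the loss series is summable and `∫₀ᵗ Σ_k a_{j,k} c_k < ∞`;
(iii) `c_j(t) = c_j(0) + ∫₀ᵗ [Σ_k a_{j+k,k} c_{j+k} c_k − Σ_k a_{j,k} c_j c_k] ds`. -/
structure IsMildSolution (a : ℕ → ℕ → ℝ) (T : ℝ≥0∞) (c : ℝ → ℕ → ℝ) : Prop where
  mem : ∀ t : ℝ, 0 ≤ t → ENNReal.ofReal t < T → MemX1plus (c t)
  cont : ∀ j : ℕ, ContinuousOn (fun t => c t (j + 1))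
      {t : ℝ | 0 ≤ t ∧ ENNReal.ofReal t < T}
  bdd : ∃ B : ℝ, ∀ t : ℝ, 0 ≤ t → ENNReal.ofReal t < T → norm1 (c t) ≤ B
  loss_summable : ∀ (j : ℕ) (s : ℝ), 0 ≤ s → ENNReal.ofReal s < T →
      Summable (fun k : ℕ => a (j + 1) (k + 1) * c s (k + 1))
  loss_integrable : ∀ (j : ℕ) (t : ℝ), 0 ≤ t → ENNReal.ofReal t < T →
      IntervalIntegrable (fun s => ∑' k : ℕ, a (j + 1) (k + 1) * c s (k + 1)) volume 0 t
  eqn : ∀ (j : ℕ) (t : ℝ), 0 ≤ t → ENNReal.ofReal t < T →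
      c t (j + 1) = c 0 (j + 1) + ∫ s in (0:ℝ)..t,
        ((∑' k : ℕ, a (j + 1 + (k + 1)) (k + 1) * c s (j + 1 + (k + 1)) * c s (k + 1)) -
         (∑' k : ℕ, a (j + 1) (k + 1) * c s (j + 1) * c s (k + 1)))

namespace RBKaux

/-! ### Generic continuity via uniform tails -/

lemma contOn_of_tail (F : ℝ → ℝ) (S : ℕ → ℝ → ℝ) (C : ℝ)
    (hS : ∀ N, ContinuousOn (S N) (Set.Ici 0))
    (h : ∀ N : ℕ, ∀ t ∈ Set.Ici (0:ℝ), |F t - S N t| ≤ C / (N+1)) :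
    ContinuousOn F (Set.Ici 0) := by
  have hU : TendstoUniformlyOn S F atTop (Set.Ici 0) := by
    rw [Metric.tendstoUniformlyOn_iff]
    intro ε hε
    have h0 : Tendsto (fun N : ℕ => C / ((N:ℝ)+1)) atTop (nhds 0) := by
      have := (tendsto_const_div_atTop_nhds_zero_nat C).comp (tendsto_add_atTop_nat 1)
      simpa [Function.comp_def] using this
    filter_upwards [h0.eventually (eventually_lt_nhds hε)] with N hN x hx
    rw [Real.dist_eq]
    exact lt_of_le_of_lt (h N x hx) hN
  exact hU.continuousOn (Frequently.of_forall hS)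

/-! ### Combinatorial rearrangements, `ℝ≥0∞` versions -/

private def eqUpper : ℕ × ℕ ≃ ↥{p : ℕ × ℕ | p.2 < p.1} where
  toFun q := ⟨(q.1 + q.2 + 1, q.2), by simp only [Set.mem_setOf_eq]; omega⟩
  invFun x := (x.1.1 - x.1.2 - 1, x.1.2)
  left_inv q := by
    cases q with
    | mk a b => exact Prod.ext (show a + b + 1 - b - 1 = a by omega) rfl
  right_inv x := by
    obtain ⟨⟨a, b⟩, h⟩ := x
    simp only [Set.mem_setOf_eq] at h
    exact Subtype.ext (Prod.ext (show a - b - 1 + b + 1 = a by omega) rfl)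

private def eqLower : ℕ × ℕ ≃ ↥{p : ℕ × ℕ | p.1 < p.2} where
  toFun q := ⟨(q.2, q.1 + q.2 + 1), by simp only [Set.mem_setOf_eq]; omega⟩
  invFun x := (x.1.2 - x.1.1 - 1, x.1.1)
  left_inv q := by
    cases q with
    | mk a b => exact Prod.ext (show a + b + 1 - b - 1 = a by omega) rfl
  right_inv x := by
    obtain ⟨⟨a, b⟩, h⟩ := x
    simp only [Set.mem_setOf_eq] at h
    exact Subtype.ext (Prod.ext rfl (show b - a - 1 + a + 1 = b by omega))

private def eqDiag : ℕ ≃ ↥{p : ℕ × ℕ | p.1 = p.2} where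
  toFun k := ⟨(k, k), rfl⟩
  invFun x := x.1.1
  left_inv k := rfl
  right_inv x := by
    obtain ⟨⟨a, b⟩, h⟩ := x
    simp only [Set.mem_setOf_eq] at h
    exact Subtype.ext (Prod.ext rfl (by simpa using h))

lemma ennreal_split (f : ℕ → ℝ≥0∞) :
    (∑' k, f k) * (∑' k, f k)
      = (∑' p : ℕ × ℕ, f (p.1 + p.2 + 1) * f p.2)
        + (∑' p : ℕ × ℕ, f (p.1 + p.2 + 1) * f p.2)
        + ∑' k, f k * f k := by
  set P : ℕ × ℕ → ℝ≥0∞ := fun p => f p.1 * f p.2 with hP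
  set U : Set (ℕ × ℕ) := {p | p.2 < p.1}
  set L : Set (ℕ × ℕ) := {p | p.1 < p.2}
  set D : Set (ℕ × ℕ) := {p | p.1 = p.2}
  have hVV : (∑' k, f k) * (∑' k, f k) = ∑' p : ℕ × ℕ, P p := by
    calc (∑' k, f k) * (∑' k, f k) = ∑' a : ℕ, f a * ∑' k, f k := ENNReal.tsum_mul_right.symm
      _ = ∑' a : ℕ, ∑' b : ℕ, f a * f b := tsum_congr fun a => ENNReal.tsum_mul_left.symm
      _ = ∑' p : ℕ × ℕ, P p := (ENNReal.tsum_prod' (f := P)).symm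
  have hsplit : ∀ p, P p = U.indicator P p + L.indicator P p + D.indicator P p := by
    intro p
    simp only [Set.indicator_apply, Set.mem_setOf_eq, U, L, D]
    rcases Nat.lt_trichotomy p.1 p.2 with h | h | h
    · rw [if_neg (by omega), if_pos h, if_neg (by omega)]; simp
    · rw [if_neg (by omega), if_neg (by omega), if_pos h]; simp
    · rw [if_pos h, if_neg (by omega), if_neg (by omega)]; simp
  have hU : ∑' p, U.indicator P p = ∑' p : ℕ × ℕ, f (p.1 + p.2 + 1) * f p.2 := by
    rw [← tsum_subtype U P, ← Equiv.tsum_eq eqUpper (fun x : ↥U => P ↑x)]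
    rfl
  have hL : ∑' p, L.indicator P p = ∑' p : ℕ × ℕ, f (p.1 + p.2 + 1) * f p.2 := by
    rw [← tsum_subtype L P, ← Equiv.tsum_eq eqLower (fun x : ↥L => P ↑x)]
    exact tsum_congr fun q => mul_comm _ _
  have hD : ∑' p, D.indicator P p = ∑' k, f k * f k := by
    rw [← tsum_subtype D P, ← Equiv.tsum_eq eqDiag (fun x : ↥D => P ↑x)]
    rfl
  rw [hVV, tsum_congr hsplit, ENNReal.tsum_add, ENNReal.tsum_add, hU, hL, hD]

private def eqUpperOdd : ℕ × ℕ ≃ ↥{p : ℕ × ℕ | p.2 < p.1 ∧ (p.1 + p.2) % 2 = 1} where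
  toFun q := ⟨(2 * q.1 + q.2 + 1, q.2), by simp only [Set.mem_setOf_eq]; omega⟩
  invFun x := ((x.1.1 - x.1.2 - 1) / 2, x.1.2)
  left_inv q := by
    cases q with
    | mk a b => exact Prod.ext (show (2 * a + b + 1 - b - 1) / 2 = a by omega) rfl
  right_inv x := by
    obtain ⟨⟨a, b⟩, h1, h2⟩ := x
    simp only [Set.mem_setOf_eq] at h1 h2
    exact Subtype.ext (Prod.ext (show 2 * ((a - b - 1) / 2) + b + 1 = a by omega) rfl)

private def eqLowerOdd : ℕ × ℕ ≃ ↥{p : ℕ × ℕ | p.1 < p.2 ∧ (p.1 + p.2) % 2 = 1} where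
  toFun q := ⟨(q.2, 2 * q.1 + q.2 + 1), by simp only [Set.mem_setOf_eq]; omega⟩
  invFun x := ((x.1.2 - x.1.1 - 1) / 2, x.1.1)
  left_inv q := by
    cases q with
    | mk a b => exact Prod.ext (show (2 * a + b + 1 - b - 1) / 2 = a by omega) rfl
  right_inv x := by
    obtain ⟨⟨a, b⟩, h1, h2⟩ := x
    simp only [Set.mem_setOf_eq] at h1 h2
    exact Subtype.ext (Prod.ext rfl (show 2 * ((b - a - 1) / 2) + a + 1 = b by omega))

private def eqEO : ℕ × ℕ ≃ ↥{p : ℕ × ℕ | p.1 % 2 = 0 ∧ p.2 % 2 = 1} where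
  toFun q := ⟨(2 * q.1, 2 * q.2 + 1), by simp only [Set.mem_setOf_eq]; omega⟩
  invFun x := (x.1.1 / 2, x.1.2 / 2)
  left_inv q := by
    cases q with
    | mk a b => exact Prod.ext (show 2 * a / 2 = a by omega) (show (2 * b + 1) / 2 = b by omega)
  right_inv x := by
    obtain ⟨⟨a, b⟩, h1, h2⟩ := x
    simp only [Set.mem_setOf_eq] at h1 h2
    exact Subtype.ext (Prod.ext (show 2 * (a / 2) = a by omega) (show 2 * (b / 2) + 1 = b by omega))

private def eqOE : ℕ × ℕ ≃ ↥{p : ℕ × ℕ | p.1 % 2 = 1 ∧ p.2 % 2 = 0} where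
  toFun q := ⟨(2 * q.1 + 1, 2 * q.2), by simp only [Set.mem_setOf_eq]; omega⟩
  invFun x := (x.1.1 / 2, x.1.2 / 2)
  left_inv q := by
    cases q with
    | mk a b => exact Prod.ext (show (2 * a + 1) / 2 = a by omega) (show 2 * b / 2 = b by omega)
  right_inv x := by
    obtain ⟨⟨a, b⟩, h1, h2⟩ := x
    simp only [Set.mem_setOf_eq] at h1 h2
    exact Subtype.ext (Prod.ext (show 2 * (a / 2) + 1 = a by omega) (show 2 * (b / 2) = b by omega))

lemma ennreal_split_odd (f : ℕ → ℝ≥0∞) :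
    (∑' p : ℕ × ℕ, f (2 * p.1 + p.2 + 1) * f p.2)
      + (∑' p : ℕ × ℕ, f (2 * p.1 + p.2 + 1) * f p.2)
      = (∑' j, f (2 * j)) * (∑' j, f (2 * j + 1))
        + (∑' j, f (2 * j + 1)) * (∑' j, f (2 * j)) := by
  set P : ℕ × ℕ → ℝ≥0∞ := fun p => f p.1 * f p.2 with hP
  set U : Set (ℕ × ℕ) := {p | p.2 < p.1 ∧ (p.1 + p.2) % 2 = 1}
  set L : Set (ℕ × ℕ) := {p | p.1 < p.2 ∧ (p.1 + p.2) % 2 = 1}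
  set EO : Set (ℕ × ℕ) := {p | p.1 % 2 = 0 ∧ p.2 % 2 = 1}
  set OE : Set (ℕ × ℕ) := {p | p.1 % 2 = 1 ∧ p.2 % 2 = 0}
  have hsplit : ∀ p, U.indicator P p + L.indicator P p
      = EO.indicator P p + OE.indicator P p := by
    intro p
    simp only [Set.indicator_apply, Set.mem_setOf_eq, U, L, EO, OE]
    by_cases hpar : (p.1 + p.2) % 2 = 1
    · rcases Nat.lt_trichotomy p.1 p.2 with h | h | h
      · rw [if_neg (by omega), if_pos ⟨h, hpar⟩]
        by_cases h1 : p.1 % 2 = 0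
        · rw [if_pos ⟨h1, by omega⟩, if_neg (by omega)]; simp
        · rw [if_neg (by omega), if_pos ⟨by omega, by omega⟩]
      · omega
      · rw [if_pos ⟨h, hpar⟩, if_neg (by omega)]
        by_cases h1 : p.1 % 2 = 0
        · rw [if_pos ⟨h1, by omega⟩, if_neg (by omega)]
        · rw [if_neg (by omega), if_pos ⟨by omega, by omega⟩]; simp
    · rw [if_neg (by omega), if_neg (by omega), if_neg (by omega), if_neg (by omega)]
  have hU : ∑' p, U.indicator P p = ∑' p : ℕ × ℕ, f (2 * p.1 + p.2 + 1) * f p.2 := by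
    rw [← tsum_subtype U P, ← Equiv.tsum_eq eqUpperOdd (fun x : ↥U => P ↑x)]
    rfl
  have hL : ∑' p, L.indicator P p = ∑' p : ℕ × ℕ, f (2 * p.1 + p.2 + 1) * f p.2 := by
    rw [← tsum_subtype L P, ← Equiv.tsum_eq eqLowerOdd (fun x : ↥L => P ↑x)]
    exact tsum_congr fun q => mul_comm _ _
  have hEO : ∑' p, EO.indicator P p = (∑' j, f (2 * j)) * (∑' j, f (2 * j + 1)) := by
    rw [← tsum_subtype EO P, ← Equiv.tsum_eq eqEO (fun x : ↥EO => P ↑x)]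
    calc ∑' q : ℕ × ℕ, f (2 * q.1) * f (2 * q.2 + 1)
        = ∑' a : ℕ, ∑' b : ℕ, f (2 * a) * f (2 * b + 1) := ENNReal.tsum_prod'
      _ = ∑' a : ℕ, f (2 * a) * ∑' b, f (2 * b + 1) := tsum_congr fun a => ENNReal.tsum_mul_left
      _ = (∑' j, f (2 * j)) * (∑' j, f (2 * j + 1)) := ENNReal.tsum_mul_right
  have hOE : ∑' p, OE.indicator P p = (∑' j, f (2 * j + 1)) * (∑' j, f (2 * j)) := by
    rw [← tsum_subtype OE P, ← Equiv.tsum_eq eqOE (fun x : ↥OE => P ↑x)]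
    calc ∑' q : ℕ × ℕ, f (2 * q.1 + 1) * f (2 * q.2)
        = ∑' a : ℕ, ∑' b : ℕ, f (2 * a + 1) * f (2 * b) := ENNReal.tsum_prod'
      _ = ∑' a : ℕ, f (2 * a + 1) * ∑' b, f (2 * b) := tsum_congr fun a => ENNReal.tsum_mul_left
      _ = _ := ENNReal.tsum_mul_right
  calc (∑' p : ℕ × ℕ, f (2 * p.1 + p.2 + 1) * f p.2)
        + (∑' p : ℕ × ℕ, f (2 * p.1 + p.2 + 1) * f p.2)
      = (∑' p, U.indicator P p) + ∑' p, L.indicator P p := by rw [hU, hL]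
    _ = ∑' p, (U.indicator P p + L.indicator P p) := (ENNReal.tsum_add).symm
    _ = ∑' p, (EO.indicator P p + OE.indicator P p) := tsum_congr hsplit
    _ = (∑' p, EO.indicator P p) + ∑' p, OE.indicator P p := ENNReal.tsum_add
    _ = _ := by rw [hEO, hOE]

/-! ### Real versions of the rearrangement identities -/

section RealIdent

variable {g : ℕ → ℝ}

lemma summable_prod_mul (hnn : ∀ i, 0 ≤ g i) (hs : Summable g) :
    Summable (fun p : ℕ × ℕ => g p.1 * g p.2) :=
  hs.mul_of_nonneg hs (fun i => hnn i) (fun i => hnn i)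

lemma summable_gain_pairs (hnn : ∀ i, 0 ≤ g i) (hs : Summable g) :
    Summable (fun p : ℕ × ℕ => g (p.1 + p.2 + 1) * g p.2) :=
  (summable_prod_mul hnn hs).comp_injective
    (i := fun p : ℕ × ℕ => (p.1 + p.2 + 1, p.2))
    (fun p q h => by simp only [Prod.mk.injEq] at h; exact Prod.ext (by omega) h.2)

lemma summable_gain (hnn : ∀ i, 0 ≤ g i) (hs : Summable g) (j : ℕ) :
    Summable (fun k => g (j + k + 1) * g k) :=
  (summable_gain_pairs hnn hs).prod_factor j

lemma hasSum_gain_sum (hnn : ∀ i, 0 ≤ g i) (hs : Summable g) :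
    HasSum (fun j => ∑' k, g (j + k + 1) * g k)
      (∑' p : ℕ × ℕ, g (p.1 + p.2 + 1) * g p.2) :=
  HasSum.prod_fiberwise (summable_gain_pairs hnn hs).hasSum
    (fun j => (summable_gain hnn hs j).hasSum)

lemma summable_gain_pairs_odd (hnn : ∀ i, 0 ≤ g i) (hs : Summable g) :
    Summable (fun p : ℕ × ℕ => g (2 * p.1 + p.2 + 1) * g p.2) :=
  (summable_prod_mul hnn hs).comp_injective
    (i := fun p : ℕ × ℕ => (2 * p.1 + p.2 + 1, p.2))
    (fun p q h => by simp only [Prod.mk.injEq] at h; exact Prod.ext (by omega) h.2)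

lemma summable_gain_odd (hnn : ∀ i, 0 ≤ g i) (hs : Summable g) (j : ℕ) :
    Summable (fun k => g (2 * j + k + 1) * g k) :=
  (summable_gain_pairs_odd hnn hs).prod_factor j

lemma hasSum_gain_sum_odd (hnn : ∀ i, 0 ≤ g i) (hs : Summable g) :
    HasSum (fun j => ∑' k, g (2 * j + k + 1) * g k)
      (∑' p : ℕ × ℕ, g (2 * p.1 + p.2 + 1) * g p.2) :=
  HasSum.prod_fiberwise (summable_gain_pairs_odd hnn hs).hasSum
    (fun j => (summable_gain_odd hnn hs j).hasSum)

lemma summable_sq (hnn : ∀ i, 0 ≤ g i) (hs : Summable g) :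
    Summable (fun k => g k * g k) := by
  have hgb : ∀ k, g k ≤ ∑' i, g i := fun k => hs.le_tsum k (fun i _ => hnn i)
  exact Summable.of_nonneg_of_le (fun k => mul_nonneg (hnn k) (hnn k))
    (fun k => mul_le_mul_of_nonneg_right (hgb k) (hnn k)) (hs.mul_left _)

lemma key_identity (hnn : ∀ i, 0 ≤ g i) (hs : Summable g) :
    2 * (∑' j : ℕ, ∑' k : ℕ, g (j + k + 1) * g k) + (∑' k, g k * g k)
      = (∑' k, g k) ^ 2 := by
  have hps := summable_gain_pairs hnn hs
  have hiter : (∑' j : ℕ, ∑' k : ℕ, g (j + k + 1) * g k)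
      = ∑' p : ℕ × ℕ, g (p.1 + p.2 + 1) * g p.2 := (hasSum_gain_sum hnn hs).tsum_eq
  set f : ℕ → ℝ≥0∞ := fun i => ENNReal.ofReal (g i) with hf
  have hSA0 : 0 ≤ ∑' p : ℕ × ℕ, g (p.1 + p.2 + 1) * g p.2 :=
    tsum_nonneg (fun p => mul_nonneg (hnn _) (hnn _))
  have hQ0 : 0 ≤ ∑' k, g k * g k := tsum_nonneg (fun k => mul_nonneg (hnn k) (hnn k))
  have hV0 : 0 ≤ ∑' k, g k := tsum_nonneg hnn
  have hA' : ENNReal.ofReal (∑' p : ℕ × ℕ, g (p.1 + p.2 + 1) * g p.2)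
      = ∑' p : ℕ × ℕ, f (p.1 + p.2 + 1) * f p.2 := by
    rw [ENNReal.ofReal_tsum_of_nonneg (fun p => mul_nonneg (hnn _) (hnn _)) hps]
    exact tsum_congr fun p => ENNReal.ofReal_mul (hnn _)
  have hQ' : ENNReal.ofReal (∑' k, g k * g k) = ∑' k, f k * f k := by
    rw [ENNReal.ofReal_tsum_of_nonneg (fun k => mul_nonneg (hnn k) (hnn k))
      (summable_sq hnn hs)]
    exact tsum_congr fun k => ENNReal.ofReal_mul (hnn _)
  have hV' : ENNReal.ofReal (∑' k, g k) = ∑' k, f k :=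
    ENNReal.ofReal_tsum_of_nonneg hnn hs
  rw [hiter]
  refine (ENNReal.ofReal_eq_ofReal_iff (by positivity) (by positivity)).mp ?_
  rw [ENNReal.ofReal_add (by positivity) hQ0, ENNReal.ofReal_mul (by norm_num : (0:ℝ) ≤ 2),
    hA', hQ', sq, ENNReal.ofReal_mul hV0, hV', ennreal_split f]
  rw [ENNReal.ofReal_ofNat, two_mul]

lemma key_identity_odd (hnn : ∀ i, 0 ≤ g i) (hs : Summable g) :
    (∑' j : ℕ, ∑' k : ℕ, g (2 * j + k + 1) * g k)
      = (∑' j : ℕ, g (2 * j)) * (∑' j : ℕ, g (2 * j + 1)) := by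
  have hps := summable_gain_pairs_odd hnn hs
  have hiter : (∑' j : ℕ, ∑' k : ℕ, g (2 * j + k + 1) * g k)
      = ∑' p : ℕ × ℕ, g (2 * p.1 + p.2 + 1) * g p.2 := (hasSum_gain_sum_odd hnn hs).tsum_eq
  set f : ℕ → ℝ≥0∞ := fun i => ENNReal.ofReal (g i) with hf
  have hse : Summable (fun j => g (2 * j)) :=
    hs.comp_injective (fun a b h => by omega)
  have hso : Summable (fun j => g (2 * j + 1)) :=
    hs.comp_injective (fun a b h => by omega)
  have hSA0 : 0 ≤ ∑' p : ℕ × ℕ, g (2 * p.1 + p.2 + 1) * g p.2 :=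
    tsum_nonneg (fun p => mul_nonneg (hnn _) (hnn _))
  have hVo0 : 0 ≤ ∑' j, g (2 * j) := tsum_nonneg (fun j => hnn _)
  have hVe0 : 0 ≤ ∑' j, g (2 * j + 1) := tsum_nonneg (fun j => hnn _)
  have hA' : ENNReal.ofReal (∑' p : ℕ × ℕ, g (2 * p.1 + p.2 + 1) * g p.2)
      = ∑' p : ℕ × ℕ, f (2 * p.1 + p.2 + 1) * f p.2 := by
    rw [ENNReal.ofReal_tsum_of_nonneg (fun p => mul_nonneg (hnn _) (hnn _)) hps]
    exact tsum_congr fun p => ENNReal.ofReal_mul (hnn _)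
  have hVo' : ENNReal.ofReal (∑' j, g (2 * j)) = ∑' j, f (2 * j) :=
    ENNReal.ofReal_tsum_of_nonneg (fun j => hnn _) hse
  have hVe' : ENNReal.ofReal (∑' j, g (2 * j + 1)) = ∑' j, f (2 * j + 1) :=
    ENNReal.ofReal_tsum_of_nonneg (fun j => hnn _) hso
  rw [hiter]
  have key : (∑' p : ℕ × ℕ, g (2 * p.1 + p.2 + 1) * g p.2)
      + (∑' p : ℕ × ℕ, g (2 * p.1 + p.2 + 1) * g p.2)
      = (∑' j, g (2 * j)) * (∑' j, g (2 * j + 1))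
        + (∑' j, g (2 * j + 1)) * (∑' j, g (2 * j)) := by
    refine (ENNReal.ofReal_eq_ofReal_iff (by positivity) (by positivity)).mp ?_
    rw [ENNReal.ofReal_add hSA0 hSA0, ENNReal.ofReal_add (by positivity) (by positivity),
      hA', ENNReal.ofReal_mul hVo0, ENNReal.ofReal_mul hVe0, hVo', hVe',
      ennreal_split_odd f]
  linarith [key]

end RealIdent

/-! ### Basic estimates for the solution -/

section RBK

variable {c : ℝ → ℕ → ℝ} {B : ℝ} {t : ℝ}

lemma summable_c (hnn : ∀ j : ℕ, 0 ≤ c t (j+1))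
    (hsw : Summable (fun j : ℕ => ((j:ℝ)+1) * c t (j+1))) :
    Summable (fun j : ℕ => c t (j+1)) := by
  refine Summable.of_nonneg_of_le hnn (fun j => ?_) hsw
  nlinarith [hnn j, (Nat.cast_nonneg j : (0:ℝ) ≤ j)]

lemma coeff_le_w (hnn : ∀ j : ℕ, 0 ≤ c t (j+1))
    (hsw : Summable (fun j : ℕ => ((j:ℝ)+1) * c t (j+1)))
    (hB : (∑' j : ℕ, ((j:ℝ)+1) * c t (j+1)) ≤ B) (j : ℕ) :
    ((j:ℝ)+1) * c t (j+1) ≤ B := by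
  refine le_trans ?_ hB
  exact hsw.le_tsum j (fun i _ => by nlinarith [hnn i, (Nat.cast_nonneg i : (0:ℝ) ≤ i)])

lemma coeff_le (hnn : ∀ j : ℕ, 0 ≤ c t (j+1))
    (hsw : Summable (fun j : ℕ => ((j:ℝ)+1) * c t (j+1)))
    (hB : (∑' j : ℕ, ((j:ℝ)+1) * c t (j+1)) ≤ B) (j : ℕ) :
    c t (j+1) ≤ B := by
  nlinarith [coeff_le_w hnn hsw hB j, hnn j, (Nat.cast_nonneg j : (0:ℝ) ≤ j)]

lemma B_nonneg (hnn : ∀ j : ℕ, 0 ≤ c t (j+1))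
    (hsw : Summable (fun j : ℕ => ((j:ℝ)+1) * c t (j+1)))
    (hB : (∑' j : ℕ, ((j:ℝ)+1) * c t (j+1)) ≤ B) : 0 ≤ B := by
  refine le_trans (tsum_nonneg (fun j => ?_)) hB
  nlinarith [hnn j, (Nat.cast_nonneg j : (0:ℝ) ≤ j)]

lemma nu_le (hnn : ∀ j : ℕ, 0 ≤ c t (j+1))
    (hsw : Summable (fun j : ℕ => ((j:ℝ)+1) * c t (j+1)))
    (hB : (∑' j : ℕ, ((j:ℝ)+1) * c t (j+1)) ≤ B) :
    (∑' j : ℕ, c t (j+1)) ≤ B := by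
  refine le_trans (Summable.tsum_le_tsum (fun j => ?_) (summable_c hnn hsw) hsw) hB
  nlinarith [hnn j, (Nat.cast_nonneg j : (0:ℝ) ≤ j)]

lemma tail_le (hnn : ∀ j : ℕ, 0 ≤ c t (j+1))
    (hsw : Summable (fun j : ℕ => ((j:ℝ)+1) * c t (j+1)))
    (hB : (∑' j : ℕ, ((j:ℝ)+1) * c t (j+1)) ≤ B)
    (N : ℕ) (m : ℕ → ℕ) (hm : Function.Injective m) (hN : ∀ j, N ≤ m j) :
    (∑' j : ℕ, c t (m j + 1)) ≤ B / (N+1) := by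
  have hw : Summable (fun j : ℕ => ((m j:ℝ)+1) * c t (m j+1)) := hsw.comp_injective hm
  have hterm : ∀ j : ℕ, c t (m j + 1) ≤ (((m j:ℝ)+1) * c t (m j+1)) / (N+1) := by
    intro j
    rw [le_div_iff₀ (by positivity : (0:ℝ) < (N:ℝ)+1)]
    have h2 : ((N:ℝ)+1) ≤ ((m j : ℝ)+1) := by
      have h3 : ((N:ℝ)) ≤ (m j : ℝ) := Nat.cast_le.mpr (hN j)
      linarith
    nlinarith [hnn (m j)]
  have hsum1 : Summable (fun j : ℕ => (((m j:ℝ)+1) * c t (m j+1)) / (N+1)) := hw.div_const _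
  calc (∑' j : ℕ, c t (m j + 1))
      ≤ ∑' j : ℕ, (((m j:ℝ)+1) * c t (m j+1)) / (N+1) :=
        Summable.tsum_le_tsum hterm (Summable.of_nonneg_of_le (fun j => hnn (m j)) hterm hsum1) hsum1
    _ = (∑' j : ℕ, ((m j:ℝ)+1) * c t (m j+1)) / (N+1) := by rw [tsum_div_const]
    _ ≤ B / (N+1) := by
        apply div_le_div_of_nonneg_right ?_ (by positivity)
        refine le_trans (Summable.tsum_le_tsum_of_inj m hm
          (fun i _ => by nlinarith [hnn i, (Nat.cast_nonneg i : (0:ℝ) ≤ i)])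
          (fun j => le_refl _) hw hsw) hB

end RBK

/-! ### Continuity of the various sums -/

section Cont

variable {c : ℝ → ℕ → ℝ} {B : ℝ}

variable (Hnn : ∀ t : ℝ, 0 ≤ t → ∀ j : ℕ, 0 ≤ c t (j+1))
  (Hsw : ∀ t : ℝ, 0 ≤ t → Summable (fun j : ℕ => ((j:ℝ)+1) * c t (j+1)))
  (HB : ∀ t : ℝ, 0 ≤ t → (∑' j : ℕ, ((j:ℝ)+1) * c t (j+1)) ≤ B)
  (Hcont : ∀ j : ℕ, ContinuousOn (fun t => c t (j + 1)) (Set.Ici 0))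

include Hnn Hsw HB Hcont in
lemma cont_nu : ContinuousOn (fun t => ∑' j : ℕ, c t (j+1)) (Set.Ici 0) := by
  apply contOn_of_tail _ (fun N t => ∑ j ∈ Finset.range N, c t (j+1)) B
  · intro N
    exact continuousOn_finset_sum _ (fun j _ => Hcont j)
  · intro N t ht
    have ht' : (0:ℝ) ≤ t := ht
    have hs := summable_c (Hnn t ht') (Hsw t ht')
    have key := Summable.sum_add_tsum_nat_add (f := fun j : ℕ => c t (j+1)) N hs
    have htail : (fun t => ∑' j : ℕ, c t (j+1)) t - (∑ j ∈ Finset.range N, c t (j+1))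
        = ∑' j : ℕ, c t (j + N + 1) := by
      simp only []
      linarith [key]
    rw [htail, abs_of_nonneg (tsum_nonneg (fun j => Hnn t ht' (j+N)))]
    exact tail_le (Hnn t ht') (Hsw t ht') (HB t ht') N (fun j => j + N)
      (add_left_injective N) (fun j => Nat.le_add_left N j)

include Hnn Hsw HB Hcont in
lemma cont_nuo : ContinuousOn (fun t => ∑' j : ℕ, c t (2*j+1)) (Set.Ici 0) := by
  apply contOn_of_tail _ (fun N t => ∑ j ∈ Finset.range N, c t (2*j+1)) B
  · intro N
    exact continuousOn_finset_sum _ (fun j _ => Hcont (2*j))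
  · intro N t ht
    have ht' : (0:ℝ) ≤ t := ht
    have hs : Summable (fun j : ℕ => c t (2*j+1)) :=
      (summable_c (Hnn t ht') (Hsw t ht')).comp_injective
        (fun a b h => by change 2*a = 2*b at h; omega)
    have key := Summable.sum_add_tsum_nat_add (f := fun j : ℕ => c t (2*j+1)) N hs
    have htail : (fun t => ∑' j : ℕ, c t (2*j+1)) t - (∑ j ∈ Finset.range N, c t (2*j+1))
        = ∑' j : ℕ, c t (2*(j+N)+1) := by
      simp only []
      linarith [key]
    rw [htail, abs_of_nonneg (tsum_nonneg (fun j => Hnn t ht' (2*(j+N))))]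
    refine tail_le (Hnn t ht') (Hsw t ht') (HB t ht') N (fun j => 2*(j+N))
      (fun a b h => ?_) (fun j => ?_)
    · change 2*(a+N) = 2*(b+N) at h; omega
    · show N ≤ 2*(j+N); omega

include Hnn Hsw HB Hcont in
lemma cont_q : ContinuousOn (fun t => ∑' j : ℕ, (c t (j+1))^2) (Set.Ici 0) := by
  apply contOn_of_tail _ (fun N t => ∑ j ∈ Finset.range N, (c t (j+1))^2) (B*B)
  · intro N
    exact continuousOn_finset_sum _ (fun j _ => (Hcont j).pow 2)
  · intro N t ht
    have ht' : (0:ℝ) ≤ t := ht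
    have hnn := Hnn t ht'; have hsw := Hsw t ht'; have hB := HB t ht'
    have hB0 : 0 ≤ B := B_nonneg hnn hsw hB
    have hNpos : (0:ℝ) < (N:ℝ)+1 := by positivity
    have hshift : Summable (fun j : ℕ => c t (j + N + 1)) :=
      (summable_c hnn hsw).comp_injective (add_left_injective N)
    have hterm : ∀ j : ℕ, (c t (j + N + 1))^2 ≤ (B/((N:ℝ)+1)) * c t (j + N + 1) := by
      intro j
      have h1 : c t (j + N + 1) ≤ B/((N:ℝ)+1) := by
        have h2 := coeff_le_w hnn hsw hB (j+N)
        rw [le_div_iff₀ hNpos]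
        have h3 : ((N:ℝ)+1) ≤ ((j:ℝ)+(N:ℝ)+1) := by
          have : (0:ℝ) ≤ (j:ℝ) := Nat.cast_nonneg j
          linarith
        have h4 : ((j+N : ℕ):ℝ) = (j:ℝ)+(N:ℝ) := by push_cast; ring
        nlinarith [Hnn t ht' (j+N), h2]
      nlinarith [Hnn t ht' (j+N)]
    have hsum2 : Summable (fun j : ℕ => (B/((N:ℝ)+1)) * c t (j + N + 1)) := hshift.mul_left _
    have hq : Summable (fun j : ℕ => (c t (j + N + 1))^2) :=
      Summable.of_nonneg_of_le (fun j => sq_nonneg _) hterm hsum2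
    have hsq : Summable (fun j : ℕ => (c t (j+1))^2) := by
      have : ∀ j : ℕ, (c t (j+1))^2 ≤ B * c t (j+1) := by
        intro j; nlinarith [Hnn t ht' j, coeff_le hnn hsw hB j]
      exact Summable.of_nonneg_of_le (fun j => sq_nonneg _)
        this ((summable_c hnn hsw).mul_left _)
    have key := Summable.sum_add_tsum_nat_add (f := fun j : ℕ => (c t (j+1))^2) N hsq
    have htail : (fun t => ∑' j : ℕ, (c t (j+1))^2) t - (∑ j ∈ Finset.range N, (c t (j+1))^2)
        = ∑' j : ℕ, (c t (j + N + 1))^2 := by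
      simp only []
      linarith [key]
    rw [htail, abs_of_nonneg (tsum_nonneg (fun j => sq_nonneg _))]
    calc (∑' j : ℕ, (c t (j + N + 1))^2)
        ≤ ∑' j : ℕ, (B/((N:ℝ)+1)) * c t (j + N + 1) := Summable.tsum_le_tsum hterm hq hsum2
      _ = (B/((N:ℝ)+1)) * ∑' j : ℕ, c t (j + N + 1) := tsum_mul_left
      _ ≤ (B/((N:ℝ)+1)) * B := by
          refine mul_le_mul_of_nonneg_left ?_ (by positivity)
          have := tail_le hnn hsw hB 0 (fun j => j + N)
            (add_left_injective N) (fun j => Nat.zero_le _)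
          simpa using this
      _ = B*B/((N:ℝ)+1) := by ring

include Hnn Hsw HB Hcont in
lemma cont_G (j : ℕ) :
    ContinuousOn (fun t => ∑' k : ℕ, c t (j+1+(k+1)) * c t (k+1)) (Set.Ici 0) := by
  apply contOn_of_tail _
    (fun N t => ∑ k ∈ Finset.range N, c t (j+1+(k+1)) * c t (k+1)) (B*B)
  · intro N
    exact continuousOn_finset_sum _ (fun k _ => (Hcont (j+1+k)).mul (Hcont k))
  · intro N t ht
    have ht' : (0:ℝ) ≤ t := ht
    have hnn := Hnn t ht'; have hsw := Hsw t ht'; have hB := HB t ht'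
    have hB0 : 0 ≤ B := B_nonneg hnn hsw hB
    have hub : ∀ k : ℕ, c t (j+1+(k+1)) * c t (k+1) ≤ B * c t (k+1) := by
      intro k
      exact mul_le_mul_of_nonneg_right (coeff_le hnn hsw hB (j+1+k)) (hnn k)
    have hnn2 : ∀ k : ℕ, 0 ≤ c t (j+1+(k+1)) * c t (k+1) :=
      fun k => mul_nonneg (hnn (j+1+k)) (hnn k)
    have hsC : Summable (fun k : ℕ => c t (k+1)) := summable_c hnn hsw
    have hsG : Summable (fun k : ℕ => c t (j+1+(k+1)) * c t (k+1)) :=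
      Summable.of_nonneg_of_le hnn2 hub (hsC.mul_left _)
    have key := Summable.sum_add_tsum_nat_add (f := fun k : ℕ => c t (j+1+(k+1)) * c t (k+1)) N hsG
    have htail : (fun t => ∑' k : ℕ, c t (j+1+(k+1)) * c t (k+1)) t
        - (∑ k ∈ Finset.range N, c t (j+1+(k+1)) * c t (k+1))
        = ∑' k : ℕ, c t (j+1+(k + N+1)) * c t (k + N+1) := by
      simp only []
      linarith [key]
    rw [htail, abs_of_nonneg (tsum_nonneg (fun k => hnn2 (k+N)))]
    have hshift : Summable (fun k : ℕ => c t (k + N + 1)) :=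
      hsC.comp_injective (add_left_injective N)
    have hshiftG : Summable (fun k : ℕ => c t (j+1+(k+N+1)) * c t (k+N+1)) :=
      hsG.comp_injective (add_left_injective N)
    calc (∑' k : ℕ, c t (j+1+(k + N+1)) * c t (k + N+1))
        ≤ ∑' k : ℕ, B * c t (k + N + 1) :=
          Summable.tsum_le_tsum (fun k => hub (k+N)) hshiftG (hshift.mul_left _)
      _ = B * ∑' k : ℕ, c t (k + N + 1) := tsum_mul_left
      _ ≤ B * (B/((N:ℝ)+1)) := by
          refine mul_le_mul_of_nonneg_left ?_ hB0
          exact tail_le hnn hsw hB N (fun k => k + N)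
            (add_left_injective N) (fun k => Nat.le_add_left N k)
      _ = B*B/((N:ℝ)+1) := by ring

end Cont

/-! ### Integral equations for the total and odd masses -/

section Fubini

variable {c : ℝ → ℕ → ℝ} {B : ℝ}

variable (Hnn : ∀ t : ℝ, 0 ≤ t → ∀ j : ℕ, 0 ≤ c t (j+1))
  (Hsw : ∀ t : ℝ, 0 ≤ t → Summable (fun j : ℕ => ((j:ℝ)+1) * c t (j+1)))
  (HB : ∀ t : ℝ, 0 ≤ t → (∑' j : ℕ, ((j:ℝ)+1) * c t (j+1)) ≤ B)
  (Hcont : ∀ j : ℕ, ContinuousOn (fun t => c t (j + 1)) (Set.Ici 0))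
  (Heqn : ∀ (j : ℕ) (t : ℝ), 0 ≤ t → c t (j+1) = c 0 (j+1) + ∫ s in (0:ℝ)..t,
      ((∑' k : ℕ, c s (j + 1 + (k + 1)) * c s (k + 1)) - ∑' k : ℕ, c s (j+1) * c s (k+1)))

include Hnn Hsw HB Hcont Heqn in
lemma integral_eq_nu (t : ℝ) (ht : 0 ≤ t) :
    (∑' j : ℕ, c t (j+1)) = (∑' j : ℕ, c 0 (j+1)) + ∫ s in (0:ℝ)..t,
      (-(((∑' k : ℕ, c s (k+1))^2 + ∑' k : ℕ, (c s (k+1))^2) / 2)) := by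
  set F : ℕ → ℝ → ℝ := fun j s =>
    (∑' k : ℕ, c s (j + 1 + (k + 1)) * c s (k + 1)) - ∑' k : ℕ, c s (j+1) * c s (k+1)
    with hFdef
  have hIoc : Set.Ioc (0:ℝ) t ⊆ Set.Ici 0 :=
    Set.Ioc_subset_Icc_self.trans Set.Icc_subset_Ici_self
  have hF2eq : ∀ j : ℕ, (fun s : ℝ => ∑' k : ℕ, c s (j+1) * c s (k+1))
      = (fun s : ℝ => c s (j+1) * ∑' k : ℕ, c s (k+1)) :=
    fun j => funext fun s => tsum_mul_left
  have hFcont : ∀ j : ℕ, ContinuousOn (F j) (Set.Ici 0) := by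
    intro j
    have h1 := cont_G Hnn Hsw HB Hcont j
    have h2 : ContinuousOn (fun s : ℝ => ∑' k : ℕ, c s (j+1) * c s (k+1)) (Set.Ici 0) := by
      rw [hF2eq j]
      exact (Hcont j).mul (cont_nu Hnn Hsw HB Hcont)
    exact h1.sub h2
  have hmeas : ∀ j : ℕ, AEStronglyMeasurable (F j) (volume.restrict (Set.Ioc 0 t)) :=
    fun j => ((hFcont j).mono hIoc).aestronglyMeasurable measurableSet_Ioc
  -- pointwise facts for s ≥ 0
  have hGsum : ∀ s : ℝ, 0 ≤ s →
      HasSum (fun j : ℕ => ∑' k : ℕ, c s (j+k+1+1) * c s (k+1))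
        (∑' p : ℕ × ℕ, c s (p.1+p.2+1+1) * c s (p.2+1)) := by
    intro s hs0
    exact hasSum_gain_sum (g := fun i => c s (i+1)) (Hnn s hs0)
      (summable_c (Hnn s hs0) (Hsw s hs0))
  have hGconv : ∀ s : ℝ, (fun j : ℕ => ∑' k : ℕ, c s (j+1+(k+1)) * c s (k+1))
      = (fun j : ℕ => ∑' k : ℕ, c s (j+k+1+1) * c s (k+1)) := by
    intro s
    refine funext fun j => tsum_congr fun k => ?_
    rw [show j+1+(k+1) = j+k+1+1 from by omega]
  have hGsum' : ∀ s : ℝ, 0 ≤ s →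
      Summable (fun j : ℕ => ∑' k : ℕ, c s (j+1+(k+1)) * c s (k+1)) := by
    intro s hs0
    rw [hGconv s]
    exact (hGsum s hs0).summable
  have hGval : ∀ s : ℝ, 0 ≤ s →
      2 * (∑' j : ℕ, ∑' k : ℕ, c s (j+1+(k+1)) * c s (k+1))
        + (∑' k : ℕ, c s (k+1) * c s (k+1)) = (∑' k : ℕ, c s (k+1))^2 := by
    intro s hs0
    have h := key_identity (g := fun i => c s (i+1)) (Hnn s hs0)
      (summable_c (Hnn s hs0) (Hsw s hs0))
    have h2 : (∑' j : ℕ, ∑' k : ℕ, c s (j+1+(k+1)) * c s (k+1))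
        = ∑' j : ℕ, ∑' k : ℕ, c s (j+k+1+1) * c s (k+1) := by rw [hGconv s]
    rw [h2]
    exact h
  have hval : ∀ s : ℝ, 0 ≤ s → (∑' j : ℕ, F j s)
      = -(((∑' k : ℕ, c s (k+1))^2 + ∑' k : ℕ, (c s (k+1))^2) / 2) := by
    intro s hs0
    have hnn := Hnn s hs0
    have hsC : Summable (fun k : ℕ => c s (k+1)) := summable_c hnn (Hsw s hs0)
    have hloss : (fun j : ℕ => ∑' k : ℕ, c s (j+1) * c s (k+1))
        = fun j : ℕ => c s (j+1) * ∑' k : ℕ, c s (k+1) := funext fun j => tsum_mul_left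
    have hlosss : Summable (fun j : ℕ => ∑' k : ℕ, c s (j+1) * c s (k+1)) := by
      rw [hloss]; exact hsC.mul_right _
    have h1 : (∑' j : ℕ, F j s)
        = (∑' j : ℕ, ∑' k : ℕ, c s (j+1+(k+1)) * c s (k+1))
          - ∑' j : ℕ, ∑' k : ℕ, c s (j+1) * c s (k+1) :=
      Summable.tsum_sub (hGsum' s hs0) hlosss
    have h2 : (∑' j : ℕ, ∑' k : ℕ, c s (j+1) * c s (k+1))
        = (∑' j : ℕ, c s (j+1)) * ∑' k : ℕ, c s (k+1) := by
      rw [hloss]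
      exact tsum_mul_right
    have h3 := hGval s hs0
    have h4 : (∑' k : ℕ, (c s (k+1))^2) = ∑' k : ℕ, c s (k+1) * c s (k+1) :=
      tsum_congr fun k => pow_two _
    have h5 : ((∑' k : ℕ, c s (k+1)))^2 = (∑' j : ℕ, c s (j+1)) * ∑' k : ℕ, c s (k+1) :=
      pow_two _
    rw [h1, h2, h4]
    linarith
  -- the ℒ¹ bound
  have hbnd : ∀ s ∈ Set.Ioc (0:ℝ) t,
      (∑' j : ℕ, (‖F j s‖₊ : ℝ≥0∞)) ≤ ENNReal.ofReal (2*(B*B)) := by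
    intro s hs
    have hs0 : (0:ℝ) ≤ s := le_of_lt hs.1
    have hnn := Hnn s hs0; have hsw := Hsw s hs0; have hB := HB s hs0
    have hB0 : 0 ≤ B := B_nonneg hnn hsw hB
    have hsC : Summable (fun k : ℕ => c s (k+1)) := summable_c hnn hsw
    set V : ℝ := ∑' k : ℕ, c s (k+1) with hV
    have hV0 : 0 ≤ V := tsum_nonneg hnn
    have hVB : V ≤ B := nu_le hnn hsw hB
    have hGnn : ∀ j : ℕ, 0 ≤ ∑' k : ℕ, c s (j+1+(k+1)) * c s (k+1) :=
      fun j => tsum_nonneg fun k => mul_nonneg (hnn _) (hnn _)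
    have hLnn : ∀ j : ℕ, 0 ≤ c s (j+1) * V := fun j => mul_nonneg (hnn j) hV0
    have habs : ∀ j : ℕ, ‖F j s‖
        ≤ (∑' k : ℕ, c s (j+1+(k+1)) * c s (k+1)) + c s (j+1) * V := by
      intro j
      have hFj : F j s = (∑' k : ℕ, c s (j+1+(k+1)) * c s (k+1)) - c s (j+1) * V := by
        rw [hFdef]
        simp only []
        rw [tsum_mul_left]
      rw [Real.norm_eq_abs, hFj, abs_le]
      constructor
      · linarith [hGnn j, hLnn j]
      · linarith [hGnn j, hLnn j]
    have hGsle : (∑' j : ℕ, ∑' k : ℕ, c s (j+1+(k+1)) * c s (k+1)) ≤ B*B := by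
      have h3 := hGval s hs0
      have hq0 : 0 ≤ ∑' k : ℕ, c s (k+1) * c s (k+1) :=
        tsum_nonneg fun k => mul_nonneg (hnn k) (hnn k)
      nlinarith [(tsum_nonneg (fun j => hGnn j) : 0 ≤ ∑' j : ℕ, ∑' k : ℕ, c s (j+1+(k+1)) * c s (k+1))]
    have hLsle : (∑' j : ℕ, c s (j+1) * V) ≤ B*B := by
      have : (∑' j : ℕ, c s (j+1) * V) = V * V := by
        rw [tsum_mul_right]
      rw [this]
      nlinarith
    have hLsum : Summable (fun j : ℕ => c s (j+1) * V) := hsC.mul_right _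
    calc (∑' j : ℕ, (‖F j s‖₊ : ℝ≥0∞))
        = ∑' j : ℕ, ENNReal.ofReal ‖F j s‖ := tsum_congr fun j =>
          (ofReal_norm _).symm
      _ ≤ ∑' j : ℕ, ENNReal.ofReal
          ((∑' k : ℕ, c s (j+1+(k+1)) * c s (k+1)) + c s (j+1) * V) :=
          ENNReal.tsum_le_tsum fun j => ENNReal.ofReal_le_ofReal (habs j)
      _ = ∑' j : ℕ, (ENNReal.ofReal (∑' k : ℕ, c s (j+1+(k+1)) * c s (k+1))
          + ENNReal.ofReal (c s (j+1) * V)) := tsum_congr fun j =>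
          ENNReal.ofReal_add (hGnn j) (hLnn j)
      _ = (∑' j : ℕ, ENNReal.ofReal (∑' k : ℕ, c s (j+1+(k+1)) * c s (k+1)))
          + ∑' j : ℕ, ENNReal.ofReal (c s (j+1) * V) := ENNReal.tsum_add
      _ = ENNReal.ofReal (∑' j : ℕ, ∑' k : ℕ, c s (j+1+(k+1)) * c s (k+1))
          + ENNReal.ofReal (∑' j : ℕ, c s (j+1) * V) := by
          rw [ENNReal.ofReal_tsum_of_nonneg hGnn (hGsum' s hs0),
            ENNReal.ofReal_tsum_of_nonneg hLnn hLsum]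
      _ ≤ ENNReal.ofReal (B*B) + ENNReal.ofReal (B*B) :=
          add_le_add (ENNReal.ofReal_le_ofReal hGsle) (ENNReal.ofReal_le_ofReal hLsle)
      _ = ENNReal.ofReal (2*(B*B)) := by
          rw [← ENNReal.ofReal_add (by positivity) (by positivity)]
          ring_nf
  have hsum_int : (∑' j : ℕ, ∫⁻ s in Set.Ioc (0:ℝ) t, ‖F j s‖₊ ∂volume) ≠ ⊤ := by
    rw [← lintegral_tsum (f := fun j s => (‖F j s‖₊ : ℝ≥0∞)) (fun j => (hmeas j).enorm)]
    have hle := setLIntegral_mono (μ := volume) (s := Set.Ioc (0:ℝ) t)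
      (f := fun s => ∑' j : ℕ, (‖F j s‖₊ : ℝ≥0∞)) measurable_const hbnd
    refine ne_top_of_le_ne_top ?_ hle
    rw [setLIntegral_const]
    exact ENNReal.mul_ne_top ENNReal.ofReal_ne_top (by simp [Real.volume_Ioc])
  -- difference form of the coordinate equations
  have hdiff : ∀ j : ℕ, c t (j+1) - c 0 (j+1) = ∫ s in Set.Ioc (0:ℝ) t, F j s ∂volume := by
    intro j
    have h := Heqn j t ht
    rw [intervalIntegral.integral_of_le ht] at h
    linarith [h]
  have hsub : (∑' j : ℕ, c t (j+1)) - (∑' j : ℕ, c 0 (j+1))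
      = ∑' j : ℕ, (c t (j+1) - c 0 (j+1)) :=
    (Summable.tsum_sub (summable_c (Hnn t ht) (Hsw t ht))
      (summable_c (Hnn 0 le_rfl) (Hsw 0 le_rfl))).symm
  have hmain : (∑' j : ℕ, c t (j+1)) - (∑' j : ℕ, c 0 (j+1))
      = ∫ s in (0:ℝ)..t,
        (-(((∑' k : ℕ, c s (k+1))^2 + ∑' k : ℕ, (c s (k+1))^2) / 2)) := by
    rw [hsub, tsum_congr hdiff, ← MeasureTheory.integral_tsum hmeas hsum_int,
      intervalIntegral.integral_of_le ht]
    refine MeasureTheory.setIntegral_congr_fun measurableSet_Ioc fun s hs => ?_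
    exact hval s (le_of_lt hs.1)
  linarith [hmain]

include Hnn Hsw HB Hcont Heqn in
lemma integral_eq_nuo (t : ℝ) (ht : 0 ≤ t) :
    (∑' j : ℕ, c t (2*j+1)) = (∑' j : ℕ, c 0 (2*j+1)) + ∫ s in (0:ℝ)..t,
      (-(∑' j : ℕ, c s (2*j+1))^2) := by
  set F : ℕ → ℝ → ℝ := fun j s =>
    (∑' k : ℕ, c s (2*j+1+(k+1)) * c s (k+1)) - ∑' k : ℕ, c s (2*j+1) * c s (k+1)
    with hFdef
  have hIoc : Set.Ioc (0:ℝ) t ⊆ Set.Ici 0 :=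
    Set.Ioc_subset_Icc_self.trans Set.Icc_subset_Ici_self
  have hinj2 : Function.Injective (fun j : ℕ => 2*j) := fun a b h => by
    change 2*a = 2*b at h; omega
  have hFcont : ∀ j : ℕ, ContinuousOn (F j) (Set.Ici 0) := by
    intro j
    have h1 := cont_G Hnn Hsw HB Hcont (2*j)
    have h2 : ContinuousOn (fun s : ℝ => ∑' k : ℕ, c s (2*j+1) * c s (k+1)) (Set.Ici 0) := by
      rw [show (fun s : ℝ => ∑' k : ℕ, c s (2*j+1) * c s (k+1))
          = (fun s : ℝ => c s (2*j+1) * ∑' k : ℕ, c s (k+1)) from funext fun s => tsum_mul_left]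
      exact (Hcont (2*j)).mul (cont_nu Hnn Hsw HB Hcont)
    exact h1.sub h2
  have hmeas : ∀ j : ℕ, AEStronglyMeasurable (F j) (volume.restrict (Set.Ioc 0 t)) :=
    fun j => ((hFcont j).mono hIoc).aestronglyMeasurable measurableSet_Ioc
  have hGsum : ∀ s : ℝ, 0 ≤ s →
      HasSum (fun j : ℕ => ∑' k : ℕ, c s (2*j+k+1+1) * c s (k+1))
        (∑' p : ℕ × ℕ, c s (2*p.1+p.2+1+1) * c s (p.2+1)) := by
    intro s hs0
    exact hasSum_gain_sum_odd (g := fun i => c s (i+1)) (Hnn s hs0)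
      (summable_c (Hnn s hs0) (Hsw s hs0))
  have hGconv : ∀ s : ℝ, (fun j : ℕ => ∑' k : ℕ, c s (2*j+1+(k+1)) * c s (k+1))
      = (fun j : ℕ => ∑' k : ℕ, c s (2*j+k+1+1) * c s (k+1)) := by
    intro s
    refine funext fun j => tsum_congr fun k => ?_
    rw [show 2*j+1+(k+1) = 2*j+k+1+1 from by omega]
  have hGsum' : ∀ s : ℝ, 0 ≤ s →
      Summable (fun j : ℕ => ∑' k : ℕ, c s (2*j+1+(k+1)) * c s (k+1)) := by
    intro s hs0
    rw [hGconv s]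
    exact (hGsum s hs0).summable
  have hGval : ∀ s : ℝ, 0 ≤ s →
      (∑' j : ℕ, ∑' k : ℕ, c s (2*j+1+(k+1)) * c s (k+1))
        = (∑' j : ℕ, c s (2*j+1)) * (∑' j : ℕ, c s (2*j+1+1)) := by
    intro s hs0
    have h := key_identity_odd (g := fun i => c s (i+1)) (Hnn s hs0)
      (summable_c (Hnn s hs0) (Hsw s hs0))
    have h2 : (∑' j : ℕ, ∑' k : ℕ, c s (2*j+1+(k+1)) * c s (k+1))
        = ∑' j : ℕ, ∑' k : ℕ, c s (2*j+k+1+1) * c s (k+1) := by rw [hGconv s]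
    rw [h2]
    exact h
  have hval : ∀ s : ℝ, 0 ≤ s → (∑' j : ℕ, F j s) = -(∑' j : ℕ, c s (2*j+1))^2 := by
    intro s hs0
    have hnn := Hnn s hs0
    have hsC : Summable (fun k : ℕ => c s (k+1)) := summable_c hnn (Hsw s hs0)
    have hse : Summable (fun j : ℕ => c s (2*j+1)) := hsC.comp_injective hinj2
    have hso : Summable (fun j : ℕ => c s (2*j+1+1)) := hsC.comp_injective
      (fun a b h => by change 2*a+1 = 2*b+1 at h; omega)
    have heo : (∑' j : ℕ, c s (2*j+1)) + (∑' j : ℕ, c s (2*j+1+1))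
        = ∑' k : ℕ, c s (k+1) :=
      tsum_even_add_odd (f := fun k => c s (k+1)) hse hso
    have hloss : (fun j : ℕ => ∑' k : ℕ, c s (2*j+1) * c s (k+1))
        = fun j : ℕ => c s (2*j+1) * ∑' k : ℕ, c s (k+1) := funext fun j => tsum_mul_left
    have hlosss : Summable (fun j : ℕ => ∑' k : ℕ, c s (2*j+1) * c s (k+1)) := by
      rw [hloss]; exact hse.mul_right _
    have h1 : (∑' j : ℕ, F j s)
        = (∑' j : ℕ, ∑' k : ℕ, c s (2*j+1+(k+1)) * c s (k+1))
          - ∑' j : ℕ, ∑' k : ℕ, c s (2*j+1) * c s (k+1) :=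
      Summable.tsum_sub (hGsum' s hs0) hlosss
    have h2 : (∑' j : ℕ, ∑' k : ℕ, c s (2*j+1) * c s (k+1))
        = (∑' j : ℕ, c s (2*j+1)) * ∑' k : ℕ, c s (k+1) := by
      rw [hloss]
      exact tsum_mul_right
    have h3 := hGval s hs0
    have hVe : (∑' j : ℕ, c s (2*j+1+1))
        = (∑' k : ℕ, c s (k+1)) - ∑' j : ℕ, c s (2*j+1) := by linarith
    rw [h1, h2, h3, hVe]
    ring
  have hbnd : ∀ s ∈ Set.Ioc (0:ℝ) t,
      (∑' j : ℕ, (‖F j s‖₊ : ℝ≥0∞)) ≤ ENNReal.ofReal (2*(B*B)) := by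
    intro s hs
    have hs0 : (0:ℝ) ≤ s := le_of_lt hs.1
    have hnn := Hnn s hs0; have hsw := Hsw s hs0; have hB := HB s hs0
    have hB0 : 0 ≤ B := B_nonneg hnn hsw hB
    have hsC : Summable (fun k : ℕ => c s (k+1)) := summable_c hnn hsw
    have hse : Summable (fun j : ℕ => c s (2*j+1)) := hsC.comp_injective hinj2
    have hso : Summable (fun j : ℕ => c s (2*j+1+1)) := hsC.comp_injective
      (fun a b h => by change 2*a+1 = 2*b+1 at h; omega)
    set V : ℝ := ∑' k : ℕ, c s (k+1) with hV
    have hV0 : 0 ≤ V := tsum_nonneg hnn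
    have hVB : V ≤ B := nu_le hnn hsw hB
    have hVoV : (∑' j : ℕ, c s (2*j+1)) ≤ V :=
      Summable.tsum_le_tsum_of_inj (fun j => 2*j) hinj2 (fun i _ => hnn i)
        (fun j => le_refl _) hse hsC
    have hVeV : (∑' j : ℕ, c s (2*j+1+1)) ≤ V :=
      Summable.tsum_le_tsum_of_inj (fun j => 2*j+1)
        (fun a b h => by change 2*a+1 = 2*b+1 at h; omega) (fun i _ => hnn i)
        (fun j => le_refl _) hso hsC
    have hVo0 : 0 ≤ ∑' j : ℕ, c s (2*j+1) := tsum_nonneg fun j => hnn _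
    have hVe0 : 0 ≤ ∑' j : ℕ, c s (2*j+1+1) := tsum_nonneg fun j => hnn _
    have hGnn : ∀ j : ℕ, 0 ≤ ∑' k : ℕ, c s (2*j+1+(k+1)) * c s (k+1) :=
      fun j => tsum_nonneg fun k => mul_nonneg (hnn _) (hnn _)
    have hLnn : ∀ j : ℕ, 0 ≤ c s (2*j+1) * V := fun j => mul_nonneg (hnn _) hV0
    have habs : ∀ j : ℕ, ‖F j s‖
        ≤ (∑' k : ℕ, c s (2*j+1+(k+1)) * c s (k+1)) + c s (2*j+1) * V := by
      intro j
      have hFj : F j s = (∑' k : ℕ, c s (2*j+1+(k+1)) * c s (k+1)) - c s (2*j+1) * V := by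
        rw [hFdef]
        simp only []
        rw [tsum_mul_left]
      rw [Real.norm_eq_abs, hFj, abs_le]
      constructor
      · linarith [hGnn j, hLnn j]
      · linarith [hGnn j, hLnn j]
    have hGsle : (∑' j : ℕ, ∑' k : ℕ, c s (2*j+1+(k+1)) * c s (k+1)) ≤ B*B := by
      rw [hGval s hs0]
      nlinarith
    have hLsle : (∑' j : ℕ, c s (2*j+1) * V) ≤ B*B := by
      have : (∑' j : ℕ, c s (2*j+1) * V) = (∑' j : ℕ, c s (2*j+1)) * V := tsum_mul_right
      rw [this]
      nlinarith
    have hLsum : Summable (fun j : ℕ => c s (2*j+1) * V) := hse.mul_right _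
    calc (∑' j : ℕ, (‖F j s‖₊ : ℝ≥0∞))
        = ∑' j : ℕ, ENNReal.ofReal ‖F j s‖ := tsum_congr fun j =>
          (ofReal_norm _).symm
      _ ≤ ∑' j : ℕ, ENNReal.ofReal
          ((∑' k : ℕ, c s (2*j+1+(k+1)) * c s (k+1)) + c s (2*j+1) * V) :=
          ENNReal.tsum_le_tsum fun j => ENNReal.ofReal_le_ofReal (habs j)
      _ = ∑' j : ℕ, (ENNReal.ofReal (∑' k : ℕ, c s (2*j+1+(k+1)) * c s (k+1))
          + ENNReal.ofReal (c s (2*j+1) * V)) := tsum_congr fun j =>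
          ENNReal.ofReal_add (hGnn j) (hLnn j)
      _ = (∑' j : ℕ, ENNReal.ofReal (∑' k : ℕ, c s (2*j+1+(k+1)) * c s (k+1)))
          + ∑' j : ℕ, ENNReal.ofReal (c s (2*j+1) * V) := ENNReal.tsum_add
      _ = ENNReal.ofReal (∑' j : ℕ, ∑' k : ℕ, c s (2*j+1+(k+1)) * c s (k+1))
          + ENNReal.ofReal (∑' j : ℕ, c s (2*j+1) * V) := by
          rw [ENNReal.ofReal_tsum_of_nonneg hGnn (hGsum' s hs0),
            ENNReal.ofReal_tsum_of_nonneg hLnn hLsum]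
      _ ≤ ENNReal.ofReal (B*B) + ENNReal.ofReal (B*B) :=
          add_le_add (ENNReal.ofReal_le_ofReal hGsle) (ENNReal.ofReal_le_ofReal hLsle)
      _ = ENNReal.ofReal (2*(B*B)) := by
          rw [← ENNReal.ofReal_add (by positivity) (by positivity)]
          ring_nf
  have hsum_int : (∑' j : ℕ, ∫⁻ s in Set.Ioc (0:ℝ) t, ‖F j s‖₊ ∂volume) ≠ ⊤ := by
    rw [← lintegral_tsum (f := fun j s => (‖F j s‖₊ : ℝ≥0∞)) (fun j => (hmeas j).enorm)]
    have hle := setLIntegral_mono (μ := volume) (s := Set.Ioc (0:ℝ) t)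
      (f := fun s => ∑' j : ℕ, (‖F j s‖₊ : ℝ≥0∞)) measurable_const hbnd
    refine ne_top_of_le_ne_top ?_ hle
    rw [setLIntegral_const]
    exact ENNReal.mul_ne_top ENNReal.ofReal_ne_top (by simp [Real.volume_Ioc])
  have hdiff : ∀ j : ℕ, c t (2*j+1) - c 0 (2*j+1) = ∫ s in Set.Ioc (0:ℝ) t, F j s ∂volume := by
    intro j
    have h := Heqn (2*j) t ht
    rw [intervalIntegral.integral_of_le ht] at h
    linarith [h]
  have hsub : (∑' j : ℕ, c t (2*j+1)) - (∑' j : ℕ, c 0 (2*j+1))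
      = ∑' j : ℕ, (c t (2*j+1) - c 0 (2*j+1)) :=
    (Summable.tsum_sub ((summable_c (Hnn t ht) (Hsw t ht)).comp_injective hinj2)
      ((summable_c (Hnn 0 le_rfl) (Hsw 0 le_rfl)).comp_injective hinj2)).symm
  have hmain : (∑' j : ℕ, c t (2*j+1)) - (∑' j : ℕ, c 0 (2*j+1))
      = ∫ s in (0:ℝ)..t, (-(∑' j : ℕ, c s (2*j+1))^2) := by
    rw [hsub, tsum_congr hdiff, ← MeasureTheory.integral_tsum hmeas hsum_int,
      intervalIntegral.integral_of_le ht]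
    refine MeasureTheory.setIntegral_congr_fun measurableSet_Ioc fun s hs => ?_
    exact hval s (le_of_lt hs.1)
  linarith [hmain]

end Fubini

/-! ### The ODE comparison lemma -/

lemma ode_bound (F g : ℝ → ℝ) (hF : ContinuousOn F (Set.Ici 0))
    (hg : ContinuousOn g (Set.Ici 0))
    (heq : ∀ u : ℝ, 0 ≤ u → F u = F 0 + ∫ s in (0:ℝ)..u, g s)
    (hFnn : ∀ u : ℝ, 0 ≤ u → 0 ≤ F u)
    (α β : ℝ) (hα : 0 < α)
    (hlb : ∀ u : ℝ, 0 ≤ u → α * F u ^ 2 ≤ -g u)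
    (hub : ∀ u : ℝ, 0 ≤ u → -g u ≤ β * F u ^ 2)
    (t : ℝ) (ht : 0 ≤ t) :
    F 0 / (1 + β * F 0 * t) ≤ F t ∧ F t ≤ F 0 / (1 + α * F 0 * t) := by
  rcases eq_or_lt_of_le (hFnn 0 le_rfl) with hF0 | hF0
  · have hg0 : ∀ u : ℝ, 0 ≤ u → g u ≤ 0 := by
      intro u hu
      nlinarith [hlb u hu, sq_nonneg (F u)]
    have hint : ∀ u ∈ Set.Icc (0:ℝ) t, 0 ≤ -g u := by
      intro u hu; linarith [hg0 u hu.1]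
    have h1 : (0:ℝ) ≤ ∫ s in (0:ℝ)..t, -g s := intervalIntegral.integral_nonneg ht hint
    have h2 : (∫ s in (0:ℝ)..t, -g s) = -∫ s in (0:ℝ)..t, g s := intervalIntegral.integral_neg
    have hFt : F t = 0 := by
      refine le_antisymm ?_ (hFnn t ht)
      rw [heq t ht, ← hF0]
      linarith
    rw [hFt, ← hF0]
    norm_num
  · have hg_int : ∀ u : ℝ, 0 ≤ u → IntervalIntegrable g volume 0 u := by
      intro u hu
      exact (hg.mono (by rw [Set.uIcc_of_le hu]; exact Set.Icc_subset_Ici_self)).intervalIntegrable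
    have hderiv : ∀ u : ℝ, 0 < u → HasDerivAt F (g u) u := by
      intro u hu
      have hmem : Set.Ici (0:ℝ) ∈ nhds u := Ici_mem_nhds hu
      have h1 : HasDerivAt (fun v => ∫ s in (0:ℝ)..v, g s) (g u) u :=
        intervalIntegral.integral_hasDerivAt_right (hg_int u hu.le)
          ⟨Set.Ici 0, hmem, hg.aestronglyMeasurable measurableSet_Ici⟩
          (hg.continuousAt hmem)
      have h2 : HasDerivAt (fun v => F 0 + ∫ s in (0:ℝ)..v, g s) (g u) u := h1.const_add _
      refine h2.congr_of_eventuallyEq ?_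
      filter_upwards [hmem] with v hv
      exact heq v hv
    have key : ∀ τ : ℝ, 0 ≤ τ → (∀ u, 0 ≤ u → u ≤ τ → 0 < F u) → ∀ u, 0 ≤ u → u ≤ τ →
        1 / F 0 + α * u ≤ 1 / F u ∧ 1 / F u ≤ 1 / F 0 + β * u := by
      intro τ hτ hpos u hu huτ
      have hFcont : ContinuousOn F (Set.Icc 0 τ) := hF.mono Set.Icc_subset_Ici_self
      have hFne : ∀ v ∈ Set.Icc (0:ℝ) τ, F v ≠ 0 := fun v hv => (hpos v hv.1 hv.2).ne'
      have hinv : ContinuousOn (fun v => 1 / F v) (Set.Icc 0 τ) :=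
        continuousOn_const.div hFcont hFne
      have hder2 : ∀ v ∈ interior (Set.Icc (0:ℝ) τ),
          HasDerivAt (fun w => 1 / F w) (-g v / F v ^ 2) v := by
        intro v hv
        rw [interior_Icc] at hv
        have hFv : F v ≠ 0 := (hpos v hv.1.le hv.2.le).ne'
        have h1 := (hderiv v hv.1).fun_inv hFv
        simpa [one_div] using h1
      have hmem0 : (0:ℝ) ∈ Set.Icc (0:ℝ) τ := ⟨le_rfl, hτ⟩
      have hmemu : u ∈ Set.Icc (0:ℝ) τ := ⟨hu, huτ⟩
      constructor
      · have hmono : MonotoneOn (fun v => 1 / F v - α * v) (Set.Icc 0 τ) := by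
          apply monotoneOn_of_deriv_nonneg (convex_Icc 0 τ)
            (hinv.sub ((continuous_const.mul continuous_id).continuousOn))
          · intro v hv
            exact ((hder2 v hv).sub
              ((hasDerivAt_id v).const_mul α)).differentiableAt.differentiableWithinAt
          · intro v hv
            rw [show ((fun v => 1 / F v) - (fun x => α) * id) = (fun w => 1 / F w) - (fun y => α * id y) from rfl,
              ((hder2 v hv).sub ((hasDerivAt_id v).const_mul α)).deriv]
            rw [interior_Icc] at hv
            have hFv : 0 < F v := hpos v hv.1.le hv.2.le
            have h3 := hlb v hv.1.le
            rw [sub_nonneg, mul_one, le_div_iff₀ (by positivity)]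
            nlinarith
        have := hmono hmem0 hmemu hu
        simp only [mul_zero, sub_zero] at this
        linarith
      · have hanti : AntitoneOn (fun v => 1 / F v - β * v) (Set.Icc 0 τ) := by
          apply antitoneOn_of_deriv_nonpos (convex_Icc 0 τ)
            (hinv.sub ((continuous_const.mul continuous_id).continuousOn))
          · intro v hv
            exact ((hder2 v hv).sub
              ((hasDerivAt_id v).const_mul β)).differentiableAt.differentiableWithinAt
          · intro v hv
            rw [show ((fun v => 1 / F v) - (fun x => β) * id) = (fun w => 1 / F w) - (fun y => β * id y) from rfl,
              ((hder2 v hv).sub ((hasDerivAt_id v).const_mul β)).deriv]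
            rw [interior_Icc] at hv
            have hFv : 0 < F v := hpos v hv.1.le hv.2.le
            have h3 := hub v hv.1.le
            rw [sub_nonpos, mul_one, div_le_iff₀ (by positivity)]
            nlinarith
        have := hanti hmem0 hmemu hu
        simp only [mul_zero, sub_zero] at this
        linarith
    have conv_lb : ∀ x : ℝ, 0 ≤ x → 0 < F x → 1 / F x ≤ 1 / F 0 + β * x →
        F 0 / (1 + β * F 0 * x) ≤ F x := by
      intro x hx hFx h
      have hd : 0 < 1 / F 0 + β * x := lt_of_lt_of_le (one_div_pos.mpr hFx) h
      have hden : (0:ℝ) < 1 + β * F 0 * x := by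
        have he : 1 + β * F 0 * x = F 0 * (1 / F 0 + β * x) := by
          field_simp
        rw [he]; exact mul_pos hF0 hd
      rw [div_le_iff₀ hden]
      have h3 := mul_le_mul_of_nonneg_left h (mul_pos hFx hF0).le
      have h4 : F x * F 0 * (1 / F x) = F 0 := by field_simp
      have h5 : F x * F 0 * (1 / F 0 + β * x) = F x * (1 + β * F 0 * x) := by
        field_simp
      linarith
    have conv_ub : ∀ x : ℝ, 0 ≤ x → 0 < F x → 1 / F 0 + α * x ≤ 1 / F x →
        F x ≤ F 0 / (1 + α * F 0 * x) := by
      intro x hx hFx h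
      have hd : 0 < 1 / F 0 + α * x :=
        add_pos_of_pos_of_nonneg (one_div_pos.mpr hF0) (mul_nonneg hα.le hx)
      have hden : (0:ℝ) < 1 + α * F 0 * x := by
        nlinarith [mul_nonneg (mul_nonneg hα.le hF0.le) hx]
      rw [le_div_iff₀ hden]
      have h3 := mul_le_mul_of_nonneg_left h (mul_pos hFx hF0).le
      have h4 : F x * F 0 * (1 / F x) = F 0 := by field_simp
      have h5 : F x * F 0 * (1 / F 0 + α * x) = F x * (1 + α * F 0 * x) := by
        field_simp
      linarith
    have hβpos : 0 < β := by
      have h1 := hlb 0 le_rfl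
      have h2 := hub 0 le_rfl
      nlinarith [sq_nonneg (F 0), pow_pos hF0 2]
    have hposAll : ∀ u : ℝ, 0 ≤ u → 0 < F u := by
      by_contra hcon
      push_neg at hcon
      obtain ⟨u₀, hu₀, hFu₀⟩ := hcon
      have hFu₀' : F u₀ = 0 := le_antisymm hFu₀ (hFnn u₀ hu₀)
      set Z : Set ℝ := Set.Ici 0 ∩ F ⁻¹' {0} with hZ
      have hZne : Z.Nonempty := ⟨u₀, hu₀, hFu₀'⟩
      have hZclosed : IsClosed Z :=
        hF.preimage_isClosed_of_isClosed isClosed_Ici isClosed_singleton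
      have hZbdd : BddBelow Z := ⟨0, fun z hz => hz.1⟩
      set t₀ := sInf Z with ht₀def
      have ht₀Z : t₀ ∈ Z := hZclosed.csInf_mem hZne hZbdd
      have ht₀0 : 0 ≤ t₀ := ht₀Z.1
      have hFt₀ : F t₀ = 0 := ht₀Z.2
      have ht₀pos : 0 < t₀ := by
        rcases ht₀0.lt_or_eq with h | h
        · exact h
        · exfalso; rw [← h] at hFt₀; linarith
      have hposlt : ∀ u, 0 ≤ u → u < t₀ → 0 < F u := by
        intro u h1 h2
        rcases (hFnn u h1).lt_or_eq with h | h
        · exact h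
        · exfalso
          have : u ∈ Z := ⟨h1, h.symm⟩
          exact absurd (csInf_le hZbdd this) (not_le.mpr h2)
      have hbd : ∀ x, 0 ≤ x → x < t₀ → F 0 / (1 + β * F 0 * x) ≤ F x := by
        intro x hx hxt
        have hpos' : ∀ u, 0 ≤ u → u ≤ x → 0 < F u :=
          fun u h1 h2 => hposlt u h1 (lt_of_le_of_lt h2 hxt)
        exact conv_lb x hx (hpos' x hx le_rfl) ((key x hx hpos' x hx le_rfl).2)
      have hFlim : Tendsto F (nhdsWithin t₀ (Set.Iio t₀)) (nhds (F t₀)) := by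
        have h1 : Tendsto F (nhdsWithin t₀ (Set.Ici 0)) (nhds (F t₀)) :=
          (hF t₀ (Set.mem_Ici.mpr ht₀0)).tendsto
        refine h1.mono_left ?_
        rw [← nhdsWithin_Ico_eq_nhdsLT ht₀pos]
        exact nhdsWithin_mono _ Set.Ico_subset_Ici_self
      have hphilim : Tendsto (fun x => F 0 / (1 + β * F 0 * x)) (nhdsWithin t₀ (Set.Iio t₀))
          (nhds (F 0 / (1 + β * F 0 * t₀))) := by
        have hden : (0:ℝ) < 1 + β * F 0 * t₀ := by
          nlinarith [mul_nonneg (mul_nonneg hβpos.le hF0.le) ht₀0]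
        have hcont : ContinuousAt (fun x => F 0 / (1 + β * F 0 * x)) t₀ := by
          apply ContinuousAt.div continuousAt_const
          · exact (by fun_prop : Continuous fun x : ℝ => 1 + β * F 0 * x).continuousAt
          · exact hden.ne'
        exact hcont.tendsto.mono_left nhdsWithin_le_nhds
      have hev : ∀ᶠ x in nhdsWithin t₀ (Set.Iio t₀),
          F 0 / (1 + β * F 0 * x) ≤ F x := by
        filter_upwards [Ioo_mem_nhdsLT_of_mem (⟨ht₀pos, le_rfl⟩ : t₀ ∈ Set.Ioc 0 t₀)]
          with x hx
        exact hbd x hx.1.le hx.2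
      have hne : (nhdsWithin t₀ (Set.Iio t₀)).NeBot := nhdsLT_neBot t₀
      have hle := le_of_tendsto_of_tendsto hphilim hFlim hev
      rw [hFt₀] at hle
      have hden2 : (0:ℝ) < 1 + β * F 0 * t₀ := by
        nlinarith [mul_nonneg (mul_nonneg hβpos.le hF0.le) ht₀0]
      have : 0 < F 0 / (1 + β * F 0 * t₀) := div_pos hF0 hden2
      linarith
    have hk := key t ht (fun u h1 _ => hposAll u h1) t ht le_rfl
    exact ⟨conv_lb t ht (hposAll t ht) hk.2, conv_ub t ht (hposAll t ht) hk.1⟩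

end RBKaux

/-- for constant coefficients `a_{j,k} = 1` and a mild solution
on `[0,∞)`, with `ν(t) = Σ_j c_j(t)` and `ν_odd(t) = Σ_j c_{2j−1}(t)`:
(a) `ν_odd(t) = ν_odd(0)/(1 + ν_odd(0) t)`;
(b) `ν(0)/(1 + ν(0) t) ≤ ν(t) ≤ ν(0)/(1 + (ν(0)/2) t)`. -/
theorem rbk_constant_kernel_number_asymptotics
    (c : ℝ → ℕ → ℝ) (hc : IsMildSolution (fun _ _ => (1 : ℝ)) ⊤ c)
    (t : ℝ) (ht : 0 ≤ t) :
    ((∑' j : ℕ, c t (2 * j + 1)) =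
        (∑' j : ℕ, c 0 (2 * j + 1)) / (1 + (∑' j : ℕ, c 0 (2 * j + 1)) * t)) ∧
    ((∑' j : ℕ, c 0 (j + 1)) / (1 + (∑' j : ℕ, c 0 (j + 1)) * t) ≤
        ∑' j : ℕ, c t (j + 1)) ∧
    ((∑' j : ℕ, c t (j + 1)) ≤
        (∑' j : ℕ, c 0 (j + 1)) / (1 + ((∑' j : ℕ, c 0 (j + 1)) / 2) * t)) := by
  classical
  obtain ⟨B, hBall⟩ := hc.bdd
  have Hnn : ∀ s : ℝ, 0 ≤ s → ∀ j : ℕ, 0 ≤ c s (j+1) :=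
    fun s hs j => (hc.mem s hs ENNReal.ofReal_lt_top).1 j
  have Hsw : ∀ s : ℝ, 0 ≤ s → Summable (fun j : ℕ => ((j:ℝ)+1) * c s (j+1)) :=
    fun s hs => (hc.mem s hs ENNReal.ofReal_lt_top).2
  have HB : ∀ s : ℝ, 0 ≤ s → (∑' j : ℕ, ((j:ℝ)+1) * c s (j+1)) ≤ B := by
    intro s hs
    simpa [norm1] using hBall s hs ENNReal.ofReal_lt_top
  have hset : {s : ℝ | 0 ≤ s ∧ ENNReal.ofReal s < ⊤} = Set.Ici 0 := by
    ext s; simp [ENNReal.ofReal_lt_top]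
  have Hcont : ∀ j : ℕ, ContinuousOn (fun s => c s (j + 1)) (Set.Ici 0) := by
    intro j
    have h := hc.cont j
    rwa [hset] at h
  have Heqn : ∀ (j : ℕ) (u : ℝ), 0 ≤ u → c u (j+1) = c 0 (j+1) + ∫ s in (0:ℝ)..u,
      ((∑' k : ℕ, c s (j + 1 + (k + 1)) * c s (k + 1))
        - ∑' k : ℕ, c s (j+1) * c s (k+1)) := by
    intro j u hu
    have h := hc.eqn j u hu ENNReal.ofReal_lt_top
    simpa using h
  -- part (a): odd mass
  have hFnnO : ∀ u : ℝ, 0 ≤ u → 0 ≤ ∑' j : ℕ, c u (2*j+1) :=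
    fun u hu => tsum_nonneg fun j => Hnn u hu (2*j)
  have hcontO : ContinuousOn (fun u => ∑' j : ℕ, c u (2*j+1)) (Set.Ici 0) :=
    RBKaux.cont_nuo Hnn Hsw HB Hcont
  have hgO : ContinuousOn (fun u => -(∑' j : ℕ, c u (2*j+1))^2) (Set.Ici 0) :=
    (hcontO.pow 2).neg
  have hodeO := RBKaux.ode_bound (fun u => ∑' j : ℕ, c u (2*j+1))
    (fun u => -(∑' j : ℕ, c u (2*j+1))^2) hcontO hgO
    (RBKaux.integral_eq_nuo Hnn Hsw HB Hcont Heqn) hFnnO 1 1 one_pos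
    (fun u _ => by simp) (fun u _ => by simp) t ht
  have hpartA : (∑' j : ℕ, c t (2 * j + 1)) =
      (∑' j : ℕ, c 0 (2 * j + 1)) / (1 + (∑' j : ℕ, c 0 (2 * j + 1)) * t) := by
    have h := le_antisymm hodeO.2 hodeO.1
    rw [one_mul] at h
    exact h
  -- part (b): total mass
  have hFnn : ∀ u : ℝ, 0 ≤ u → 0 ≤ ∑' j : ℕ, c u (j+1) :=
    fun u hu => tsum_nonneg fun j => Hnn u hu j
  have hcontN : ContinuousOn (fun u => ∑' j : ℕ, c u (j+1)) (Set.Ici 0) :=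
    RBKaux.cont_nu Hnn Hsw HB Hcont
  have hcontQ : ContinuousOn (fun u => ∑' j : ℕ, (c u (j+1))^2) (Set.Ici 0) :=
    RBKaux.cont_q Hnn Hsw HB Hcont
  have hgN : ContinuousOn
      (fun u => -(((∑' k : ℕ, c u (k+1))^2 + ∑' k : ℕ, (c u (k+1))^2) / 2))
      (Set.Ici 0) := (((hcontN.pow 2).add hcontQ).div_const 2).neg
  have hqle : ∀ u : ℝ, 0 ≤ u →
      (∑' k : ℕ, (c u (k+1))^2) ≤ (∑' k : ℕ, c u (k+1))^2 := by
    intro u hu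
    have hid := RBKaux.key_identity (g := fun i => c u (i+1)) (Hnn u hu)
      (RBKaux.summable_c (Hnn u hu) (Hsw u hu))
    have hS0 : 0 ≤ ∑' j : ℕ, ∑' k : ℕ, c u (j+k+1+1) * c u (k+1) :=
      tsum_nonneg fun j => tsum_nonneg fun k => mul_nonneg (Hnn u hu _) (Hnn u hu _)
    have hqq : (∑' k : ℕ, (c u (k+1))^2) = ∑' k : ℕ, c u (k+1) * c u (k+1) :=
      tsum_congr fun k => pow_two _
    rw [hqq]
    linarith
  have hq0 : ∀ u : ℝ, 0 ≤ u → 0 ≤ ∑' k : ℕ, (c u (k+1))^2 :=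
    fun u _ => tsum_nonneg fun k => sq_nonneg _
  have hodeN := RBKaux.ode_bound (fun u => ∑' j : ℕ, c u (j+1))
    (fun u => -(((∑' k : ℕ, c u (k+1))^2 + ∑' k : ℕ, (c u (k+1))^2) / 2)) hcontN hgN
    (RBKaux.integral_eq_nu Hnn Hsw HB Hcont Heqn) hFnn (1/2) 1 (by norm_num)
    (fun u hu => by
      simp only [neg_neg]
      have := hq0 u hu
      linarith)
    (fun u hu => by
      simp only [neg_neg, one_mul]
      have := hqle u hu
      linarith) t ht
  refine ⟨hpartA, ?_, ?_⟩
  · have h := hodeN.1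
    rwa [one_mul] at h
  · have h := hodeN.2
    have he : 1 + 1/2 * (∑' j : ℕ, c 0 (j+1)) * t
        = 1 + (∑' j : ℕ, c 0 (j+1))/2 * t := by ring
    rwa [he] at h
end

section
/- Assume a_{j,k} = 1 for all j,k ∈ ℕ. Let A₀ > 0 and α ∈ [0,1), and set β := A₀α/(1−α²). Then the function c given by c_j(t) := A₀ α^j/(1 + β t) for j ∈ ℕ and t ≥ 0 is a mild solution of the RBK system on [0,∞) with initial condition c_j(0) = A₀ α^j; moreover, if α ∈ (0,1), then for every j ∈ ℕ, lim_{t→∞} t·c_j(t) = (1−α²)·α^{j−1}, and lim_{t→∞} t·Σ_{j=1}^∞ c_j(t) = 1 + α. -/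
open MeasureTheory Filter Topology
open scoped ENNReal

section RBKAux

open Filter Topology

private lemma rbk_tendsto_aux (C β : ℝ) (hβ : 0 < β) :
    Tendsto (fun t : ℝ => t * (C / (1 + β * t))) atTop (𝓝 (C / β)) := by
  have h1 : Tendsto (fun t : ℝ => t⁻¹ + β) atTop (𝓝 (0 + β)) :=
    tendsto_inv_atTop_zero.add tendsto_const_nhds
  rw [zero_add] at h1
  have h2 : Tendsto (fun t : ℝ => C / (t⁻¹ + β)) atTop (𝓝 (C / β)) :=
    tendsto_const_nhds.div h1 hβ.ne'
  refine h2.congr' ?_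
  filter_upwards [eventually_gt_atTop (0:ℝ)] with t ht
  have h3 : (1 + β * t) ≠ 0 := by positivity
  field_simp

end RBKAux

/-- for constant coefficients `a_{j,k} = 1`, `A₀ > 0`, `α ∈ [0,1)`
and `β = A₀α/(1−α²)`, the function `c_j(t) = A₀ α^j/(1+βt)` is a mild solution
of the RBK system on `[0,∞)` with `c_j(0) = A₀ α^j`; moreover if `α > 0` then
`t c_j(t) → (1−α²) α^{j−1}` and `t Σ_j c_j(t) → 1 + α` as `t → ∞`. -/

theorem rbk_self_similar_solution
    (A₀ : ℝ) (hA₀ : 0 < A₀) (α : ℝ) (hα0 : 0 ≤ α) (hα1 : α < 1) :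
    IsMildSolution (fun _ _ => (1 : ℝ)) ⊤
      (fun t j => A₀ * α ^ j / (1 + (A₀ * α / (1 - α ^ 2)) * t)) ∧
    (∀ j : ℕ, (fun t (j : ℕ) => A₀ * α ^ j / (1 + (A₀ * α / (1 - α ^ 2)) * t)) 0 (j + 1)
        = A₀ * α ^ (j + 1)) ∧
    (0 < α →
      (∀ j : ℕ, Tendsto
          (fun t : ℝ => t * (A₀ * α ^ (j + 1) / (1 + (A₀ * α / (1 - α ^ 2)) * t)))
          atTop (𝓝 ((1 - α ^ 2) * α ^ j))) ∧
      Tendsto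
        (fun t : ℝ => t * ∑' j : ℕ, A₀ * α ^ (j + 1) / (1 + (A₀ * α / (1 - α ^ 2)) * t))
        atTop (𝓝 (1 + α))) := by
  have hα2 : α ^ 2 < 1 := pow_lt_one₀ hα0 hα1 two_ne_zero
  have h1α2 : (0:ℝ) < 1 - α ^ 2 := by linarith
  have h1α : (0:ℝ) < 1 - α := by linarith
  set β := A₀ * α / (1 - α ^ 2) with hβdef
  have hβ0 : 0 ≤ β := div_nonneg (mul_nonneg hA₀.le hα0) h1α2.le
  have hD : ∀ t : ℝ, 0 ≤ t → (1:ℝ) ≤ 1 + β * t := fun t ht => by nlinarith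
  have hDpos : ∀ t : ℝ, 0 ≤ t → (0:ℝ) < 1 + β * t := fun t ht => lt_of_lt_of_le one_pos (hD t ht)
  -- geometric tsum with +1 shift
  have hgeo : Summable (fun k : ℕ => α ^ k) := summable_geometric_of_lt_one hα0 hα1
  have hsum_base : ∀ D : ℝ, ∑' k : ℕ, A₀ * α ^ (k + 1) / D = A₀ * α * (1 - α)⁻¹ / D := by
    intro D
    rw [tsum_div_const]
    congr 1
    have : ∀ k : ℕ, A₀ * α ^ (k + 1) = (A₀ * α) * α ^ k := fun k => by ring
    rw [tsum_congr this, tsum_mul_left, tsum_geometric_of_lt_one hα0 hα1]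
  -- summability of (j+1) * A₀ α^(j+1)
  have hS1 : Summable (fun j : ℕ => ((j : ℝ) + 1) * (A₀ * α ^ (j + 1))) := by
    have s1 : Summable (fun j : ℕ => (j : ℝ) * α ^ j) := by
      simpa using summable_pow_mul_geometric_of_norm_lt_one 1
        (r := α) (by rwa [Real.norm_eq_abs, abs_of_nonneg hα0])
    have s2 : Summable (fun j : ℕ => (A₀ * α) * ((j : ℝ) * α ^ j) + (A₀ * α) * α ^ j) :=
      (s1.mul_left _).add (hgeo.mul_left _)
    exact s2.congr (fun j => by ring)
  refine ⟨?_, ?_, ?_⟩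
  · constructor
    · -- mem
      intro t ht _
      constructor
      · intro j
        have := hDpos t ht
        positivity
      · refine ((hS1.div_const (1 + β * t)).congr (fun j => by ring))
    · -- cont
      intro j
      refine ContinuousOn.div continuousOn_const (by fun_prop) ?_
      intro t ht
      exact (hDpos t ht.1).ne'
    · -- bdd
      refine ⟨∑' j : ℕ, ((j : ℝ) + 1) * (A₀ * α ^ (j + 1)), fun t ht _ => ?_⟩
      have h1 : norm1 (fun j => A₀ * α ^ j / (1 + β * t))
          = (∑' j : ℕ, ((j : ℝ) + 1) * (A₀ * α ^ (j + 1))) / (1 + β * t) := by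
        rw [norm1, ← tsum_div_const]
        exact tsum_congr fun j => by ring
      rw [h1]
      refine div_le_self (tsum_nonneg fun j => ?_) (hD t ht)
      positivity
    · -- loss_summable
      intro j s hs _
      refine ((hgeo.mul_left (A₀ * α)).div_const (1 + β * s)).congr (fun k => ?_)
      simp only [one_mul]
      ring
    · -- loss_integrable
      intro j t ht _
      have h1 : (fun s : ℝ => ∑' k : ℕ, (1:ℝ) * (A₀ * α ^ (k + 1) / (1 + β * s)))
          = fun s : ℝ => A₀ * α * (1 - α)⁻¹ / (1 + β * s) := by
        funext s
        simp only [one_mul]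
        exact hsum_base _
      simp only [one_mul]
      have h2 := congrFun h1
      simp only [one_mul] at h2
      have h3 : IntervalIntegrable (fun s : ℝ => A₀ * α * (1 - α)⁻¹ / (1 + β * s))
          MeasureTheory.volume 0 t := by
        refine ContinuousOn.intervalIntegrable ?_
        refine ContinuousOn.div continuousOn_const (by fun_prop) ?_
        intro s hs
        rw [Set.uIcc_of_le ht] at hs
        exact (hDpos s hs.1).ne'
      exact h3.congr (fun s _ => (h2 s).symm)
    · -- eqn
      intro j t ht _
      simp only [one_mul]
      set C := A₀ * α ^ (j + 1) with hC
      have hpoint : ∀ s : ℝ,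
          ((∑' k : ℕ, A₀ * α ^ (j + 1 + (k + 1)) / (1 + β * s) * (A₀ * α ^ (k + 1) / (1 + β * s))) -
           (∑' k : ℕ, A₀ * α ^ (j + 1) / (1 + β * s) * (A₀ * α ^ (k + 1) / (1 + β * s))))
          = -(C * β) / (1 + β * s) ^ 2 := by
        intro s
        have e1 : ∑' k : ℕ, A₀ * α ^ (j + 1 + (k + 1)) / (1 + β * s) * (A₀ * α ^ (k + 1) / (1 + β * s))
            = (A₀ ^ 2 * α ^ (j + 3)) * (1 - α ^ 2)⁻¹ / (1 + β * s) ^ 2 := by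
          have : ∀ k : ℕ, A₀ * α ^ (j + 1 + (k + 1)) / (1 + β * s) * (A₀ * α ^ (k + 1) / (1 + β * s))
              = (A₀ ^ 2 * α ^ (j + 3)) * (α ^ 2) ^ k / (1 + β * s) ^ 2 := by
            intro k
            rw [div_mul_div_comm]
            congr 1 <;> ring
          rw [tsum_congr this, tsum_div_const, tsum_mul_left,
            tsum_geometric_of_lt_one (by positivity) hα2]
        have e2 : ∑' k : ℕ, A₀ * α ^ (j + 1) / (1 + β * s) * (A₀ * α ^ (k + 1) / (1 + β * s))
            = (A₀ ^ 2 * α ^ (j + 2)) * (1 - α)⁻¹ / (1 + β * s) ^ 2 := by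
          have : ∀ k : ℕ, A₀ * α ^ (j + 1) / (1 + β * s) * (A₀ * α ^ (k + 1) / (1 + β * s))
              = (A₀ ^ 2 * α ^ (j + 2)) * α ^ k / (1 + β * s) ^ 2 := by
            intro k
            rw [div_mul_div_comm]
            congr 1 <;> ring
          rw [tsum_congr this, tsum_div_const, tsum_mul_left,
            tsum_geometric_of_lt_one hα0 hα1]
        rw [e1, e2, div_sub_div_same, neg_div, ← neg_div]
        congr 1
        rw [hC, hβdef]
        field_simp
        ring
      rw [intervalIntegral.integral_congr (fun s _ => hpoint s)]
      have hint : ∫ s in (0:ℝ)..t, -(C * β) / (1 + β * s) ^ 2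
          = C / (1 + β * t) - C / (1 + β * 0) := by
        refine intervalIntegral.integral_eq_sub_of_hasDerivAt (f := fun u => C / (1 + β * u)) ?_ ?_
        · intro s hs
          rw [Set.uIcc_of_le ht] at hs
          have hne : (1 + β * s) ≠ 0 := (hDpos s hs.1).ne'
          have h := (hasDerivAt_const s C).fun_div
            (((hasDerivAt_id s).const_mul β).const_add 1) hne
          refine h.congr_deriv ?_
          simp only [id]
          ring
        · refine ContinuousOn.intervalIntegrable ?_
          refine ContinuousOn.div continuousOn_const (by fun_prop) ?_
          intro s hs
          rw [Set.uIcc_of_le ht] at hs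
          have := hDpos s hs.1
          positivity
      rw [hint]
      ring
  · intro j
    simp
  · intro hαpos
    have hβpos : 0 < β := by
      rw [hβdef]; positivity
    constructor
    · intro j
      have h := rbk_tendsto_aux (A₀ * α ^ (j + 1)) β hβpos
      have heq : A₀ * α ^ (j + 1) / β = (1 - α ^ 2) * α ^ j := by
        rw [hβdef]
        field_simp
        ring
      rw [heq] at h
      exact h
    · have h := rbk_tendsto_aux (A₀ * α * (1 - α)⁻¹) β hβpos
      have heq : A₀ * α * (1 - α)⁻¹ / β = 1 + α := by
        rw [hβdef]
        field_simp
        ring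
      rw [heq] at h
      refine h.congr (fun t => ?_)
      rw [hsum_base (1 + β * t)]
end
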